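/- arXiv:1607.06985 — 8 statements merged into one kernel-verified Lean document; each statement's English description precedes it below -/
import Mathlib

section
/- Let F be a field and n a natural number. For a 3-element subset f = {i,j,k} of Fin n with i < j < k, define the boundary chain ∂f to be the finitely supported function from 2-element subsets of Fin n to F taking value 1 at {j,k}, value -1 at {i,k}, value 1 at {i,j}, and 0 elsewhere. For a set Y of 3-element subsets of Fin n, define the F-shadow SH(Y;F) to be the set of 3-element subsets f such that ∂f lies in the F-linear span of {∂g : g ∈ Y}. Then SH(Y;F) is tetra-closed: for every 4-element subset s of Fin n, whenever three of the four 3-element subsets of s belong to SH(Y;F), so does the fourth. -/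
/-- The boundary chain of a triple `f = {i, j, k}` with `i < j < k`: the
(finitely supported) function on 2-element subsets of `Fin n` taking the
value `1` at `{j, k}`, `-1` at `{i, k}`, `1` at `{i, j}` and `0` elsewhere.
(For each `x ∈ f`, the face `f.erase x` receives the sign `(-1)^r` where
`r` is the number of elements of `f` smaller than `x`.) -/
noncomputable def bdry (F : Type*) [Field F] {n : ℕ} (f : Finset (Fin n)) :
    Finset (Fin n) → F :=
  fun e => ∑ x ∈ f,
    if f.erase x = e then (-1 : F) ^ ((f.filter (fun y => y < x)).card) else 0

/-- The `F`-shadow of a set `Y` of triples: all triples `f` whose boundary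
chain lies in the `F`-linear span of the boundary chains of members of `Y`. -/
noncomputable def shadow (F : Type*) [Field F] {n : ℕ}
    (Y : Set (Finset (Fin n))) : Set (Finset (Fin n)) :=
  {f | f.card = 3 ∧ bdry F f ∈ Submodule.span F (bdry F '' Y)}

lemma sign_aux {n : ℕ} (s : Finset (Fin n)) {x z : Fin n} (hx : x ∈ s) :
    ((s.erase x).filter (fun y => y < z)).card + (if x < z then 1 else 0)
      = (s.filter (fun y => y < z)).card := by
  rw [Finset.filter_erase]
  by_cases h : x < z
  · have hxm : x ∈ s.filter (fun y => y < z) := Finset.mem_filter.2 ⟨hx, h⟩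
    rw [if_pos h, Finset.card_erase_of_mem hxm]
    have : 0 < (s.filter (fun y => y < z)).card := Finset.card_pos.2 ⟨x, hxm⟩
    omega
  · rw [if_neg h, Finset.erase_eq_of_notMem (by simp [h]), add_zero]

lemma bdry_sum_eq_zero (F : Type*) [Field F] {n : ℕ} (s e : Finset (Fin n)) :
    ∑ x ∈ s, (-1 : F) ^ ((s.filter (fun y => y < x)).card)
        * bdry F (s.erase x) e = 0 := by
  unfold bdry
  simp_rw [Finset.mul_sum]
  rw [Finset.sum_sigma']
  apply Finset.sum_involution (fun p _ => (⟨p.2, p.1⟩ : Σ _ : Fin n, Fin n))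
  · rintro ⟨x, z⟩ hp
    simp only [Finset.mem_sigma, Finset.mem_erase] at hp
    obtain ⟨hx, hzx, hz⟩ := hp
    simp only
    rw [Finset.erase_right_comm (a := z) (b := x)]
    by_cases hc : (s.erase x).erase z = e
    · rw [if_pos hc, if_pos hc]
      set A := (s.filter (fun y => y < x)).card with hA
      set B := (s.filter (fun y => y < z)).card with hB
      set A' := ((s.erase z).filter (fun y => y < x)).card with hA'
      set B' := ((s.erase x).filter (fun y => y < z)).card with hB'
      have h1 : B' + (if x < z then 1 else 0) = B := sign_aux s hx
      have h2 : A' + (if z < x then 1 else 0) = A := sign_aux s hz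
      have h3 : (if x < z then 1 else 0) + (if z < x then 1 else 0) = 1 := by
        rcases lt_or_gt_of_ne (hzx ∘ Eq.symm : x ≠ z) with h | h
        · simp [h, asymm h]
        · simp [h, asymm h]
      have hodd : Odd ((A + B') + (B + A')) := by
        rw [Nat.odd_iff]; omega
      have hp1 : (-1 : F) ^ (A + B') * (-1) ^ (B + A') = -1 := by
        rw [← pow_add]; exact Odd.neg_one_pow hodd
      have hp2 : (-1 : F) ^ (B + A') * (-1) ^ (B + A') = 1 := by
        rw [← pow_add]; exact Even.neg_one_pow ⟨B + A', rfl⟩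
      have key : (-1 : F) ^ (A + B') = -(-1 : F) ^ (B + A') := by
        calc (-1 : F) ^ (A + B')
            = (-1 : F) ^ (A + B') * ((-1) ^ (B + A') * (-1) ^ (B + A')) := by
              rw [hp2, mul_one]
          _ = ((-1 : F) ^ (A + B') * (-1) ^ (B + A')) * (-1) ^ (B + A') := by
              ring
          _ = -(-1 : F) ^ (B + A') := by rw [hp1]; ring
      rw [← pow_add, ← pow_add, key]
      ring
    · rw [if_neg hc, if_neg hc]
      simp
  · rintro ⟨x, z⟩ hp _
    simp only [Finset.mem_sigma, Finset.mem_erase] at hp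
    intro h
    have := congrArg Sigma.fst h
    simp only at this
    exact hp.2.1 this
  · rintro ⟨x, z⟩ hp
    simp only [Finset.mem_sigma, Finset.mem_erase] at hp ⊢
    exact ⟨hp.2.2, fun h => hp.2.1 h.symm, hp.1⟩
  · rintro ⟨x, z⟩ _
    rfl

/-- The `F`-shadow is tetra-closed: for every 4-element subset `s` of `Fin n`,
if three of the four 3-element subsets of `s` lie in the shadow, so does the
fourth. -/
theorem shadow_tetraClosed (F : Type*) [Field F] (n : ℕ)
    (Y : Set (Finset (Fin n))) (hY : ∀ g ∈ Y, g.card = 3)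
    (s : Finset (Fin n)) (hs : s.card = 4)
    (f : Finset (Fin n)) (hf : f ∈ s.powersetCard 3)
    (hthree : ∀ g ∈ s.powersetCard 3, g ≠ f → g ∈ shadow F Y) :
    f ∈ shadow F Y := by
  rw [Finset.mem_powersetCard] at hf
  obtain ⟨hfs, hfc⟩ := hf
  -- find the vertex x₀ with f = s.erase x₀
  have hdiff : (s \ f).card = 1 := by
    rw [Finset.card_sdiff_of_subset hfs, hs, hfc]
  obtain ⟨x₀, hx₀⟩ := Finset.card_eq_one.1 hdiff
  have hx₀s : x₀ ∈ s := by
    have : x₀ ∈ s \ f := hx₀ ▸ Finset.mem_singleton_self x₀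
    exact (Finset.mem_sdiff.1 this).1
  have hx₀f : x₀ ∉ f := by
    have : x₀ ∈ s \ f := hx₀ ▸ Finset.mem_singleton_self x₀
    exact (Finset.mem_sdiff.1 this).2
  have hfe : s.erase x₀ = f := by
    apply Finset.eq_of_subset_of_card_le
    · intro a ha
      rw [Finset.mem_erase] at ha
      by_contra haf
      have : a ∈ s \ f := Finset.mem_sdiff.2 ⟨ha.2, haf⟩
      rw [hx₀] at this
      exact ha.1 (Finset.mem_singleton.1 this)
    · rw [hfc, Finset.card_erase_of_mem hx₀s, hs]
  -- faces other than f are in the shadow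
  have hface : ∀ x ∈ s.erase x₀, bdry F (s.erase x) ∈ Submodule.span F (bdry F '' Y) := by
    intro x hx
    rw [Finset.mem_erase] at hx
    have hmem : s.erase x ∈ s.powersetCard 3 := by
      rw [Finset.mem_powersetCard]
      exact ⟨Finset.erase_subset _ _, by rw [Finset.card_erase_of_mem hx.2, hs]⟩
    have hne : s.erase x ≠ f := by
      intro h
      apply hx₀f
      rw [← h]
      exact Finset.mem_erase.2 ⟨fun hc => hx.1 hc.symm, hx₀s⟩
    exact (hthree _ hmem hne).2
  -- the signed sum of boundaries vanishes
  set r : Fin n → ℕ := fun x => (s.filter (fun y => y < x)).card with hr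
  have hzero : ∑ x ∈ s, ((-1 : F) ^ (r x)) • bdry F (s.erase x) = 0 := by
    funext e
    have := bdry_sum_eq_zero F s e
    simpa [Finset.sum_apply, smul_eq_mul] using this
  have hsplit : ((-1 : F) ^ (r x₀)) • bdry F (s.erase x₀)
      + ∑ x ∈ s.erase x₀, ((-1 : F) ^ (r x)) • bdry F (s.erase x) = 0 :=
    (Finset.add_sum_erase s (fun x => ((-1 : F) ^ (r x)) • bdry F (s.erase x)) hx₀s).trans
      hzero
  have hspan : ((-1 : F) ^ (r x₀)) • bdry F f ∈ Submodule.span F (bdry F '' Y) := by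
    rw [← hfe]
    have hsum : ∑ x ∈ s.erase x₀, ((-1 : F) ^ (r x)) • bdry F (s.erase x)
        ∈ Submodule.span F (bdry F '' Y) :=
      Submodule.sum_mem _ fun x hx => Submodule.smul_mem _ _ (hface x hx)
    have heq : ((-1 : F) ^ (r x₀)) • bdry F (s.erase x₀)
        = -∑ x ∈ s.erase x₀, ((-1 : F) ^ (r x)) • bdry F (s.erase x) := by
      linear_combination (norm := abel) hsplit
    rw [heq]
    exact Submodule.neg_mem _ hsum
  refine ⟨hfc, ?_⟩
  have : bdry F f = ((-1 : F) ^ (r x₀)) • (((-1 : F) ^ (r x₀)) • bdry F f) := by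
    rw [smul_smul, ← pow_add]
    rw [Even.neg_one_pow ⟨r x₀, rfl⟩, one_smul]
  rw [this]
  exact Submodule.smul_mem _ _ hspan
end

section
/- Fix n ∈ ℕ and a tetra-closed set G of triples of Fin n, and a threshold t ∈ ℕ with n > 3 + 3t. Let f = {x,y,z} be a triple such that each of its three edges {x,y}, {x,z}, {y,z} is t-good (i.e., each is contained in at most t bad triples). Then f ∈ G. -/
set_option maxHeartbeats 1000000


/-- A set `G` of triples of `Fin n` is tetra-closed if for every 4-element
subset `s` of `Fin n`, whenever three of the four 3-element subsets of `s`
belong to `G`, so does the fourth. -/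
def TetraClosed {n : ℕ} (G : Finset (Finset (Fin n))) : Prop :=
  ∀ s : Finset (Fin n), s.card = 4 →
    ∀ f ∈ s.powersetCard 3, (∀ g ∈ s.powersetCard 3, g ≠ f → g ∈ G) → f ∈ G

/-- The bad triples (triples of `Fin n` not in `G`) containing the edge `e`. -/
def badTriplesOn {n : ℕ} (G : Finset (Finset (Fin n))) (e : Finset (Fin n)) :
    Finset (Finset (Fin n)) :=
  ((Finset.univ : Finset (Fin n)).powersetCard 3).filter (fun f => e ⊆ f ∧ f ∉ G)

lemma badVerts_card_le {n : ℕ} (G : Finset (Finset (Fin n))) (a b : Fin n) (hab : a ≠ b) :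
    (Finset.univ.filter
      (fun v => v ≠ a ∧ v ≠ b ∧ ({a, b, v} : Finset (Fin n)) ∉ G)).card
      ≤ (badTriplesOn G {a, b}).card := by
  apply Finset.card_le_card_of_injOn (fun v => ({a, b, v} : Finset (Fin n)))
  · intro v hv
    simp only [Finset.mem_coe, Finset.mem_filter, Finset.mem_univ, true_and] at hv
    obtain ⟨hva, hvb, hvG⟩ := hv
    simp only [Finset.mem_coe, badTriplesOn, Finset.mem_filter, Finset.mem_powersetCard]
    refine ⟨⟨Finset.subset_univ _, ?_⟩, ?_, hvG⟩
    · rw [Finset.card_insert_of_notMem, Finset.card_insert_of_notMem,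
        Finset.card_singleton]
      · simp [Ne.symm hvb]
      · simp [hab, Ne.symm hva, Ne.symm hvb]
    · intro w hw
      simp only [Finset.mem_insert, Finset.mem_singleton] at hw
      simp only [Finset.mem_insert, Finset.mem_singleton]
      tauto
  · intro v hv w hw hvw
    have hvw' : ({a, b, v} : Finset (Fin n)) = {a, b, w} := hvw
    simp only [Finset.mem_coe, Finset.mem_filter, Finset.mem_univ, true_and] at hv hw
    have : v ∈ ({a, b, w} : Finset (Fin n)) := by
      rw [← hvw']; simp
    simp only [Finset.mem_insert, Finset.mem_singleton] at this
    rcases this with h | h | h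
    · exact absurd h hv.1
    · exact absurd h hv.2.1
    · exact h

/-- Claim 3.2: if `n > 3 + 3t`, `G` is tetra-closed, and the three edges of a
triple `{x, y, z}` are each `t`-good (contained in at most `t` bad triples),
then `{x, y, z} ∈ G`. -/
theorem triple_with_good_edges_mem (n t : ℕ) (G : Finset (Finset (Fin n)))
    (hGtriples : ∀ f ∈ G, f.card = 3) (hG : TetraClosed G)
    (hn : n > 3 + 3 * t)
    (x y z : Fin n) (hxy : x ≠ y) (hxz : x ≠ z) (hyz : y ≠ z)
    (hexy : (badTriplesOn G {x, y}).card ≤ t)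
    (hexz : (badTriplesOn G {x, z}).card ≤ t)
    (heyz : (badTriplesOn G {y, z}).card ≤ t) :
    ({x, y, z} : Finset (Fin n)) ∈ G := by
  have h1 : (Finset.univ.filter
      (fun v => v ≠ x ∧ v ≠ y ∧ ({x, y, v} : Finset (Fin n)) ∉ G)).card ≤ t :=
    le_trans (badVerts_card_le G x y hxy) hexy
  have h2 : (Finset.univ.filter
      (fun v => v ≠ x ∧ v ≠ z ∧ ({x, z, v} : Finset (Fin n)) ∉ G)).card ≤ t :=
    le_trans (badVerts_card_le G x z hxz) hexz
  have h3 : (Finset.univ.filter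
      (fun v => v ≠ y ∧ v ≠ z ∧ ({y, z, v} : Finset (Fin n)) ∉ G)).card ≤ t :=
    le_trans (badVerts_card_le G y z hyz) heyz
  have hcard3 : ({x, y, z} : Finset (Fin n)).card = 3 := by
    rw [Finset.card_insert_of_notMem (by simp [hxy, hxz]),
      Finset.card_insert_of_notMem (by simp [hyz]), Finset.card_singleton]
  obtain ⟨v, hv⟩ : ∃ v : Fin n, v ∉ (({x, y, z} : Finset (Fin n))
      ∪ Finset.univ.filter (fun v => v ≠ x ∧ v ≠ y ∧ ({x, y, v} : Finset (Fin n)) ∉ G)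
      ∪ Finset.univ.filter (fun v => v ≠ x ∧ v ≠ z ∧ ({x, z, v} : Finset (Fin n)) ∉ G)
      ∪ Finset.univ.filter (fun v => v ≠ y ∧ v ≠ z ∧ ({y, z, v} : Finset (Fin n)) ∉ G)) := by
    set S : Finset (Fin n) := ({x, y, z} : Finset (Fin n))
      ∪ Finset.univ.filter (fun v => v ≠ x ∧ v ≠ y ∧ ({x, y, v} : Finset (Fin n)) ∉ G)
      ∪ Finset.univ.filter (fun v => v ≠ x ∧ v ≠ z ∧ ({x, z, v} : Finset (Fin n)) ∉ G)
      ∪ Finset.univ.filter (fun v => v ≠ y ∧ v ≠ z ∧ ({y, z, v} : Finset (Fin n)) ∉ G)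
      with hSdef
    have hS : S.card < n := by
      have c1 := Finset.card_union_le (({x, y, z} : Finset (Fin n))
        ∪ Finset.univ.filter (fun v => v ≠ x ∧ v ≠ y ∧ ({x, y, v} : Finset (Fin n)) ∉ G)
        ∪ Finset.univ.filter (fun v => v ≠ x ∧ v ≠ z ∧ ({x, z, v} : Finset (Fin n)) ∉ G))
        (Finset.univ.filter (fun v => v ≠ y ∧ v ≠ z ∧ ({y, z, v} : Finset (Fin n)) ∉ G))
      have c2 := Finset.card_union_le (({x, y, z} : Finset (Fin n))
        ∪ Finset.univ.filter (fun v => v ≠ x ∧ v ≠ y ∧ ({x, y, v} : Finset (Fin n)) ∉ G))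
        (Finset.univ.filter (fun v => v ≠ x ∧ v ≠ z ∧ ({x, z, v} : Finset (Fin n)) ∉ G))
      have c3 := Finset.card_union_le (({x, y, z} : Finset (Fin n)))
        (Finset.univ.filter (fun v => v ≠ x ∧ v ≠ y ∧ ({x, y, v} : Finset (Fin n)) ∉ G))
      rw [← hSdef] at c1
      omega
    by_contra h
    push_neg at h
    have hsub : (Finset.univ : Finset (Fin n)) ⊆ S := fun a _ => h a
    have := Finset.card_le_card hsub
    rw [Finset.card_univ, Fintype.card_fin] at this
    omega
  simp only [Finset.mem_union, not_or, Finset.mem_filter, Finset.mem_univ, true_and,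
    Finset.mem_insert, Finset.mem_singleton, not_and, not_not] at hv
  obtain ⟨⟨⟨hvxyz, hvBxy⟩, hvBxz⟩, hvByz⟩ := hv
  push_neg at hvxyz
  obtain ⟨hvx, hvy, hvz⟩ := hvxyz
  have gxy : ({x, y, v} : Finset (Fin n)) ∈ G := hvBxy hvx hvy
  have gxz : ({x, z, v} : Finset (Fin n)) ∈ G := hvBxz hvx hvz
  have gyz : ({y, z, v} : Finset (Fin n)) ∈ G := hvByz hvy hvz
  have hscard : ({v, x, y, z} : Finset (Fin n)).card = 4 := by
    rw [show ({v, x, y, z} : Finset (Fin n)) = insert v {x, y, z} from rfl,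
      Finset.card_insert_of_notMem (by simp [hvx, hvy, hvz]), hcard3]
  refine hG {v, x, y, z} hscard {x, y, z} ?_ ?_
  · rw [Finset.mem_powersetCard]
    exact ⟨by intro a ha; simp only [Finset.mem_insert, Finset.mem_singleton] at ha ⊢; tauto,
      hcard3⟩
  · intro g hg hgne
    rw [Finset.mem_powersetCard] at hg
    obtain ⟨hgsub, hgcard⟩ := hg
    have hdiff : (({v, x, y, z} : Finset (Fin n)) \ g).card = 1 := by
      rw [Finset.card_sdiff_of_subset hgsub, hscard, hgcard]
    obtain ⟨w, hw⟩ := Finset.card_eq_one.mp hdiff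
    have hgeq : g = ({v, x, y, z} : Finset (Fin n)) \ {w} := by
      have h1 : ({v, x, y, z} : Finset (Fin n)) \ ({v, x, y, z} \ g) = g :=
        Finset.sdiff_sdiff_eq_self hgsub
      rw [hw] at h1
      exact h1.symm
    have hwmem : w ∈ ({v, x, y, z} : Finset (Fin n)) := by
      have : w ∈ ({v, x, y, z} : Finset (Fin n)) \ g := hw ▸ Finset.mem_singleton_self w
      exact (Finset.mem_sdiff.mp this).1
    simp only [Finset.mem_insert, Finset.mem_singleton] at hwmem
    rcases hwmem with h | h | h | h
    · exfalso
      apply hgne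
      rw [hgeq, h]
      ext a
      simp only [Finset.mem_sdiff, Finset.mem_insert, Finset.mem_singleton]
      constructor
      · rintro ⟨rfl | rfl | rfl | rfl, hne⟩
        · exact absurd rfl hne
        · exact Or.inl rfl
        · exact Or.inr (Or.inl rfl)
        · exact Or.inr (Or.inr rfl)
      · rintro (rfl | rfl | rfl)
        · exact ⟨Or.inr (Or.inl rfl), Ne.symm hvx⟩
        · exact ⟨Or.inr (Or.inr (Or.inl rfl)), Ne.symm hvy⟩
        · exact ⟨Or.inr (Or.inr (Or.inr rfl)), Ne.symm hvz⟩
    · have : g = ({y, z, v} : Finset (Fin n)) := by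
        rw [hgeq, h]
        ext a
        simp only [Finset.mem_sdiff, Finset.mem_insert, Finset.mem_singleton]
        constructor
        · rintro ⟨rfl | rfl | rfl | rfl, hne⟩
          · exact Or.inr (Or.inr rfl)
          · exact absurd rfl hne
          · exact Or.inl rfl
          · exact Or.inr (Or.inl rfl)
        · rintro (rfl | rfl | rfl)
          · exact ⟨Or.inr (Or.inr (Or.inl rfl)), Ne.symm hxy⟩
          · exact ⟨Or.inr (Or.inr (Or.inr rfl)), Ne.symm hxz⟩
          · exact ⟨Or.inl rfl, hvx⟩
      rw [this]; exact gyz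
    · have : g = ({x, z, v} : Finset (Fin n)) := by
        rw [hgeq, h]
        ext a
        simp only [Finset.mem_sdiff, Finset.mem_insert, Finset.mem_singleton]
        constructor
        · rintro ⟨rfl | rfl | rfl | rfl, hne⟩
          · exact Or.inr (Or.inr rfl)
          · exact Or.inl rfl
          · exact absurd rfl hne
          · exact Or.inr (Or.inl rfl)
        · rintro (rfl | rfl | rfl)
          · exact ⟨Or.inr (Or.inl rfl), hxy⟩
          · exact ⟨Or.inr (Or.inr (Or.inr rfl)), Ne.symm hyz⟩
          · exact ⟨Or.inl rfl, hvy⟩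
      rw [this]; exact gxz
    · have : g = ({x, y, v} : Finset (Fin n)) := by
        rw [hgeq, h]
        ext a
        simp only [Finset.mem_sdiff, Finset.mem_insert, Finset.mem_singleton]
        constructor
        · rintro ⟨rfl | rfl | rfl | rfl, hne⟩
          · exact Or.inr (Or.inr rfl)
          · exact Or.inl rfl
          · exact Or.inr (Or.inl rfl)
          · exact absurd rfl hne
        · rintro (rfl | rfl | rfl)
          · exact ⟨Or.inr (Or.inl rfl), hxz⟩
          · exact ⟨Or.inr (Or.inr (Or.inl rfl)), hyz⟩
          · exact ⟨Or.inl rfl, hvz⟩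
      rw [this]; exact gxy
end

section
/- Fix n ∈ ℕ, a tetra-closed set G of triples of Fin n, and a threshold t ∈ ℕ with n > 4 + 4t. Let x, y, z, v be four distinct vertices of Fin n such that {x,y,v} ∈ G and each of the four edges {v,x}, {x,z}, {z,y}, {y,v} is t-good. Then {x,y,z} ∈ G. -/
/-- Apexes `w` for which the triangle on edge `{a,b}` is bad. -/
def badApex {n : ℕ} (G : Finset (Finset (Fin n))) (a b : Fin n) : Finset (Fin n) :=
  Finset.univ.filter (fun w => w ≠ a ∧ w ≠ b ∧ ({a, b, w} : Finset (Fin n)) ∉ G)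

lemma card_triple {n : ℕ} {a b c : Fin n} (hab : a ≠ b) (hac : a ≠ c) (hbc : b ≠ c) :
    ({a, b, c} : Finset (Fin n)).card = 3 := by
  rw [Finset.card_insert_of_notMem (by simp [hab, hac]),
    Finset.card_insert_of_notMem (by simp [hbc])]
  simp

lemma badApex_card_le {n : ℕ} (G : Finset (Finset (Fin n))) (a b : Fin n) (hab : a ≠ b) :
    (badApex G a b).card ≤ (badTriplesOn G {a, b}).card := by
  apply Finset.card_le_card_of_injOn (fun w => ({a, b, w} : Finset (Fin n)))
  · intro w hw
    simp only [Finset.mem_coe, badApex, Finset.mem_filter, Finset.mem_univ, true_and] at hw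
    obtain ⟨hwa, hwb, hwG⟩ := hw
    simp only [Finset.mem_coe, badTriplesOn, Finset.mem_filter, Finset.mem_powersetCard]
    refine ⟨⟨Finset.subset_univ _, card_triple hab (Ne.symm hwa) (Ne.symm hwb)⟩,
      ?_, hwG⟩
    intro u hu
    simp only [Finset.mem_insert, Finset.mem_singleton] at hu ⊢
    tauto
  · intro w hw w' hw' h
    simp only [Finset.coe_filter, Finset.mem_univ, true_and, Set.mem_setOf_eq,
      badApex, Finset.mem_filter] at hw hw'
    simp only at h
    have hm : w ∈ ({a, b, w'} : Finset (Fin n)) := by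
      rw [← h]; simp
    simp only [Finset.mem_insert, Finset.mem_singleton] at hm
    rcases hm with h1 | h1 | h1
    · exact absurd h1 hw.1
    · exact absurd h1 hw.2.1
    · exact h1

lemma tetra_apply {n : ℕ} {G : Finset (Finset (Fin n))} (hG : TetraClosed G)
    {a b c d : Fin n} (hab : a ≠ b) (hac : a ≠ c) (had : a ≠ d)
    (hbc : b ≠ c) (hbd : b ≠ d) (hcd : c ≠ d)
    (h1 : ({a, b, d} : Finset (Fin n)) ∈ G)
    (h2 : ({a, c, d} : Finset (Fin n)) ∈ G)
    (h3 : ({b, c, d} : Finset (Fin n)) ∈ G) :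
    ({a, b, c} : Finset (Fin n)) ∈ G := by
  set s : Finset (Fin n) := {a, b, c, d} with hs
  have hmem : ∀ u, u ∈ s ↔ (u = a ∨ u = b ∨ u = c ∨ u = d) := by
    intro u; simp [hs]
  have hscard : s.card = 4 := by
    rw [hs, Finset.card_insert_of_notMem (by simp [hab, hac, had]),
      Finset.card_insert_of_notMem (by simp [hbc, hbd]),
      Finset.card_insert_of_notMem (by simp [hcd])]
    simp
  have hea : s.erase a = {b, c, d} := by
    ext u
    simp only [Finset.mem_erase, hmem, Finset.mem_insert, Finset.mem_singleton]
    constructor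
    · rintro ⟨hu, h | h | h | h⟩ <;> simp_all
    · rintro (h | h | h) <;> subst h <;>
        simp [hab.symm, hac.symm, had.symm]
  have heb : s.erase b = {a, c, d} := by
    ext u
    simp only [Finset.mem_erase, hmem, Finset.mem_insert, Finset.mem_singleton]
    constructor
    · rintro ⟨hu, h | h | h | h⟩ <;> simp_all
    · rintro (h | h | h) <;> subst h <;>
        simp [hab, hbc.symm, hbd.symm]
  have hec : s.erase c = {a, b, d} := by
    ext u
    simp only [Finset.mem_erase, hmem, Finset.mem_insert, Finset.mem_singleton]
    constructor
    · rintro ⟨hu, h | h | h | h⟩ <;> simp_all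
    · rintro (h | h | h) <;> subst h <;>
        simp [hac, hbc, hcd.symm]
  have hed : s.erase d = {a, b, c} := by
    ext u
    simp only [Finset.mem_erase, hmem, Finset.mem_insert, Finset.mem_singleton]
    constructor
    · rintro ⟨hu, h | h | h | h⟩ <;> simp_all
    · rintro (h | h | h) <;> subst h <;>
        simp [had, hbd, hcd]
  have hfmem : ({a, b, c} : Finset (Fin n)) ∈ s.powersetCard 3 := by
    rw [Finset.mem_powersetCard]
    refine ⟨?_, card_triple hab hac hbc⟩
    intro u hu
    simp only [Finset.mem_insert, Finset.mem_singleton] at hu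
    rw [hmem]; tauto
  apply hG s hscard _ hfmem
  intro g hg hgne
  rw [Finset.mem_powersetCard] at hg
  obtain ⟨hgs, hgc⟩ := hg
  have hss : g ⊂ s := by
    rw [Finset.ssubset_def]
    refine ⟨hgs, fun h => ?_⟩
    have := Finset.card_le_card h
    omega
  obtain ⟨e, hes, heg⟩ := Finset.exists_of_ssubset hss
  have hge : g = s.erase e := by
    apply Finset.eq_of_subset_of_card_le
    · intro u hu
      exact Finset.mem_erase.mpr ⟨fun h => heg (h ▸ hu), hgs hu⟩
    · rw [Finset.card_erase_of_mem hes, hscard, hgc]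
  rw [hmem] at hes
  rcases hes with h | h | h | h <;> subst h
  · rw [hge, hea]; exact h3
  · rw [hge, heb]; exact h2
  · rw [hge, hec]; exact h1
  · exact absurd (hge.trans hed) hgne

set_option maxHeartbeats 1000000 in
/-- The triangulation step in the proof of Lemma 2.3: if `n > 4 + 4t`, `G` is
tetra-closed, the vertices `x, y, z, v` are pairwise distinct, `{x, y, v} ∈ G`
and the four edges `{v,x}`, `{x,z}`, `{z,y}`, `{y,v}` are each `t`-good, then
`{x, y, z} ∈ G`. -/
theorem triangulation_square (n t : ℕ) (G : Finset (Finset (Fin n)))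
    (hGtriples : ∀ f ∈ G, f.card = 3) (hG : TetraClosed G)
    (hn : n > 4 + 4 * t)
    (x y z v : Fin n)
    (hxy : x ≠ y) (hxz : x ≠ z) (hxv : x ≠ v)
    (hyz : y ≠ z) (hyv : y ≠ v) (hzv : z ≠ v)
    (hxyv : ({x, y, v} : Finset (Fin n)) ∈ G)
    (hvx : (badTriplesOn G {v, x}).card ≤ t)
    (hxz' : (badTriplesOn G {x, z}).card ≤ t)
    (hzy : (badTriplesOn G {z, y}).card ≤ t)
    (hyv' : (badTriplesOn G {y, v}).card ≤ t) :
    ({x, y, z} : Finset (Fin n)) ∈ G := by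
  -- Find an apex w
  set U : Finset (Fin n) :=
    ({x, y, z, v} : Finset (Fin n)) ∪ badApex G v x ∪ badApex G x z ∪
      badApex G z y ∪ badApex G y v with hU
  have hUcard : U.card ≤ 4 + 4 * t := by
    have h0 : ({x, y, z, v} : Finset (Fin n)).card ≤ 4 := by
      apply le_trans (Finset.card_insert_le _ _)
      apply Nat.succ_le_succ
      apply le_trans (Finset.card_insert_le _ _)
      apply Nat.succ_le_succ
      apply le_trans (Finset.card_insert_le _ _)
      simp
    have h1 := (badApex_card_le G v x hxv.symm).trans hvx
    have h2 := (badApex_card_le G x z hxz).trans hxz'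
    have h3 := (badApex_card_le G z y hyz.symm).trans hzy
    have h4 := (badApex_card_le G y v hyv).trans hyv'
    calc U.card ≤ _ := Finset.card_union_le _ _
      _ ≤ _ := by
        refine Nat.add_le_add (Finset.card_union_le _ _ |>.trans
          (Nat.add_le_add (Finset.card_union_le _ _ |>.trans
            (Nat.add_le_add (Finset.card_union_le _ _ |>.trans
              (Nat.add_le_add h0 h1)) h2)) h3)) h4
      _ ≤ 4 + 4 * t := by omega
  have hex : ∃ w : Fin n, w ∉ U := by
    by_contra h
    push_neg at h
    have : (Finset.univ : Finset (Fin n)).card ≤ U.card :=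
      Finset.card_le_card (fun u _ => h u)
    rw [Finset.card_univ, Fintype.card_fin] at this
    omega
  obtain ⟨w, hw⟩ := hex
  simp only [hU, Finset.mem_union, not_or, badApex, Finset.mem_filter,
    Finset.mem_univ, true_and, not_and, not_not, Finset.mem_insert,
    Finset.mem_singleton] at hw
  obtain ⟨⟨⟨⟨hwS, hbvx⟩, hbxz⟩, hbzy⟩, hbyv⟩ := hw
  push_neg at hwS
  obtain ⟨hwx, hwy, hwz, hwv⟩ := hwS
  have hvxw : ({v, x, w} : Finset (Fin n)) ∈ G := hbvx hwv hwx
  have hxzw : ({x, z, w} : Finset (Fin n)) ∈ G := hbxz hwx hwz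
  have hzyw : ({z, y, w} : Finset (Fin n)) ∈ G := hbzy hwz hwy
  have hyvw : ({y, v, w} : Finset (Fin n)) ∈ G := hbyv hwy hwv
  -- step 1: {x, y, w} ∈ G using s = {x, y, w, v}
  have hxwv : ({x, w, v} : Finset (Fin n)) ∈ G := by
    rw [Finset.pair_comm w v, Finset.insert_comm x v]; exact hvxw
  have hywv : ({y, w, v} : Finset (Fin n)) ∈ G := by
    rw [Finset.pair_comm w v]; exact hyvw
  have hxyw : ({x, y, w} : Finset (Fin n)) ∈ G :=
    tetra_apply hG hxy (Ne.symm hwx) hxv (Ne.symm hwy) hyv hwv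
      
      hxyv hxwv hywv
  -- step 2: {x, y, z} ∈ G using s = {x, y, z, w}
  have hyzw : ({y, z, w} : Finset (Fin n)) ∈ G := by
    rw [Finset.insert_comm y z]; exact hzyw
  exact tetra_apply hG hxy hxz (Ne.symm hwx) hyz (Ne.symm hwy) (Ne.symm hwz)
    hxyw hxzw hyzw
end

section
/- Fix n ∈ ℕ, a set G of triples of Fin n, and a threshold t ∈ ℕ. If the number of bad triples (triples of Fin n not in G) is at most B, then (t+1) times the number of t-bad edges is at most 3B. -/
/-- The `t`-bad edges: the 2-element subsets of `Fin n` contained in more than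
`t` bad triples. -/
def tBadEdges {n : ℕ} (G : Finset (Finset (Fin n))) (t : ℕ) :
    Finset (Finset (Fin n)) :=
  ((Finset.univ : Finset (Fin n)).powersetCard 2).filter
    (fun e => t < (badTriplesOn G e).card)

/-- Claim 3.4(1), first part: if there are at most `B` bad triples, then
`(t+1)` times the number of `t`-bad edges is at most `3B`. -/
theorem count_bad_edges (n t B : ℕ) (G : Finset (Finset (Fin n)))
    (hGtriples : ∀ f ∈ G, f.card = 3)
    (hB : (((Finset.univ : Finset (Fin n)).powersetCard 3).filter
        (fun f => f ∉ G)).card ≤ B) :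
    (t + 1) * (tBadEdges G t).card ≤ 3 * B := by
  classical
  set S := (((Finset.univ : Finset (Fin n)).powersetCard 3).filter (fun f => f ∉ G)) with hS
  set E := tBadEdges G t with hE
  -- key: badTriplesOn G e = S.filter (e ⊆ ·)
  have hbt : ∀ e, badTriplesOn G e = S.filter (fun f => e ⊆ f) := by
    intro e
    simp only [badTriplesOn, hS, Finset.filter_filter]
    apply Finset.filter_congr
    intro f _
    simp [and_comm]
  have h1 : (t + 1) * E.card ≤ ∑ e ∈ E, (badTriplesOn G e).card := by
    calc (t+1) * E.card = ∑ _e ∈ E, (t+1) := by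
          rw [Finset.sum_const, smul_eq_mul, mul_comm]
      _ ≤ _ := ?_
    apply Finset.sum_le_sum
    intro e he
    rw [hE, tBadEdges, Finset.mem_filter] at he
    omega
  have h2 : ∑ e ∈ E, (badTriplesOn G e).card = ∑ f ∈ S, (E.filter (fun e => e ⊆ f)).card := by
    simp only [hbt, Finset.card_filter]
    exact Finset.sum_comm
  have h3 : ∀ f ∈ S, (E.filter (fun e => e ⊆ f)).card ≤ 3 := by
    intro f hf
    rw [hS, Finset.mem_filter, Finset.mem_powersetCard] at hf
    have hsub : E.filter (fun e => e ⊆ f) ⊆ f.powersetCard 2 := by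
      intro e he
      rw [Finset.mem_filter] at he
      rw [Finset.mem_powersetCard]
      refine ⟨he.2, ?_⟩
      have := he.1
      rw [hE, tBadEdges, Finset.mem_filter, Finset.mem_powersetCard] at this
      exact this.1.2
    calc (E.filter (fun e => e ⊆ f)).card ≤ (f.powersetCard 2).card :=
          Finset.card_le_card hsub
      _ = Nat.choose 3 2 := by rw [Finset.card_powersetCard, hf.1.2]
      _ = 3 := rfl
  calc (t + 1) * E.card ≤ ∑ f ∈ S, (E.filter (fun e => e ⊆ f)).card := by
        rw [← h2]; exact h1
    _ ≤ ∑ _f ∈ S, 3 := Finset.sum_le_sum h3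
    _ = 3 * S.card := by rw [Finset.sum_const, smul_eq_mul, mul_comm]
    _ ≤ 3 * B := by omega
end

section
/- Fix n ∈ ℕ, a tetra-closed set G of triples of Fin n, and thresholds t, s ∈ ℕ with n > 3 + 3t and 3s + 1 ≤ t. Let x, y, v be three distinct s-good vertices such that the edges {v,x} and {v,y} are t-good and {v,x,y} ∈ G. Then the edge {x,y} is t-good. -/
/-- The number of `t`-bad edges containing the vertex `v`. -/
def badEdgeDegree {n : ℕ} (G : Finset (Finset (Fin n))) (t : ℕ) (v : Fin n) : ℕ :=
  ((tBadEdges G t).filter (fun e => v ∈ e)).card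

lemma card3' {α : Type*} [DecidableEq α] {a b c : α} (hab : a ≠ b) (hac : a ≠ c)
    (hbc : b ≠ c) : ({a, b, c} : Finset α).card = 3 := by
  rw [Finset.card_insert_of_notMem (by simp [hab, hac]),
    Finset.card_insert_of_notMem (by simp [hbc]), Finset.card_singleton]

lemma card4' {α : Type*} [DecidableEq α] {a b c d : α} (hab : a ≠ b) (hac : a ≠ c)
    (had : a ≠ d) (hbc : b ≠ c) (hbd : b ≠ d) (hcd : c ≠ d) :
    ({a, b, c, d} : Finset α).card = 4 := by
  rw [Finset.card_insert_of_notMem (by simp [hab, hac, had]), card3' hbc hbd hcd]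

lemma subset3' {α : Type*} [DecidableEq α] {g : Finset α} {p q r e : α}
    (hsub : ∀ w ∈ g, w = p ∨ w = q ∨ w = r ∨ w = e) (he : e ∉ g)
    (hcard : g.card = 3) (hc3 : ({p, q, r} : Finset α).card = 3) : g = {p, q, r} := by
  apply Finset.eq_of_subset_of_card_le _ (by omega)
  intro w hw
  rcases hsub w hw with h | h | h | h <;> simp [h]
  exact absurd (h ▸ hw) he

lemma tetra_step {n : ℕ} {G : Finset (Finset (Fin n))} (hG : TetraClosed G)
    {a b c d : Fin n} (hab : a ≠ b) (hac : a ≠ c) (had : a ≠ d) (hbc : b ≠ c)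
    (hbd : b ≠ d) (hcd : c ≠ d) (h1 : ({a, b, c} : Finset (Fin n)) ∈ G)
    (h2 : ({a, b, d} : Finset (Fin n)) ∈ G) (h3 : ({a, c, d} : Finset (Fin n)) ∈ G) :
    ({b, c, d} : Finset (Fin n)) ∈ G := by
  apply hG {a, b, c, d} (card4' hab hac had hbc hbd hcd) {b, c, d}
  · rw [Finset.mem_powersetCard]
    refine ⟨?_, card3' hbc hbd hcd⟩
    intro w hw; simp at hw ⊢; tauto
  · intro g hg hne
    rw [Finset.mem_powersetCard] at hg
    obtain ⟨hsub, hcard⟩ := hg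
    have hsub' : ∀ w ∈ g, w = a ∨ w = b ∨ w = c ∨ w = d := by
      intro w hw; have := hsub hw; simpa using this
    by_cases hA : a ∈ g
    · by_cases hB : b ∈ g
      · by_cases hC : c ∈ g
        · have hD : d ∉ g := by
            intro hD
            have h4 : ({a, b, c, d} : Finset (Fin n)) ⊆ g := by
              intro w hw; simp at hw; rcases hw with h|h|h|h <;> subst h <;> assumption
            have := Finset.card_le_card h4
            rw [card4' hab hac had hbc hbd hcd, hcard] at this
            omega
          have : g = {a, b, c} := by
            apply subset3' (fun w hw => by have := hsub' w hw; tauto) hD hcard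
              (card3' hab hac hbc)
          rw [this]; exact h1
        · have : g = {a, b, d} := by
            apply subset3' (fun w hw => by have := hsub' w hw; tauto) hC hcard
              (card3' hab had hbd)
          rw [this]; exact h2
      · have : g = {a, c, d} := by
          apply subset3' (fun w hw => by have := hsub' w hw; tauto) hB hcard
            (card3' hac had hcd)
        rw [this]; exact h3
    · have : g = {b, c, d} := by
        apply subset3' (fun w hw => by have := hsub' w hw; tauto) hA hcard
          (card3' hbc hbd hcd)
      exact absurd this hne

lemma badTriplesOn_card {n : ℕ} {G : Finset (Finset (Fin n))} {a b : Fin n}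
    (hab : a ≠ b) :
    (badTriplesOn G {a, b}).card =
      (Finset.univ.filter
        (fun z => z ≠ a ∧ z ≠ b ∧ ({a, b, z} : Finset (Fin n)) ∉ G)).card := by
  symm
  apply Finset.card_bij (fun z _ => ({a, b, z} : Finset (Fin n)))
  · intro z hz
    simp only [Finset.mem_filter, Finset.mem_univ, true_and] at hz
    obtain ⟨hza, hzb, hzG⟩ := hz
    simp only [badTriplesOn, Finset.mem_filter, Finset.mem_powersetCard]
    refine ⟨⟨fun w _ => Finset.mem_univ w, card3' hab (Ne.symm hza) (Ne.symm hzb)⟩,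
      ?_, hzG⟩
    intro w hw; simp at hw ⊢; tauto
  · intro z1 h1 z2 h2 heq
    simp only [Finset.mem_filter, Finset.mem_univ, true_and] at h1 h2
    have : z1 ∈ ({a, b, z2} : Finset (Fin n)) := by rw [← heq]; simp
    simp at this
    rcases this with h | h | h
    · exact absurd h h1.1
    · exact absurd h h1.2.1
    · exact h
  · intro f hf
    simp only [badTriplesOn, Finset.mem_filter, Finset.mem_powersetCard] at hf
    obtain ⟨⟨-, hcard⟩, hsubf, hfG⟩ := hf
    have hnsub : ¬ f ⊆ ({a, b} : Finset (Fin n)) := by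
      intro h
      have := Finset.card_le_card h
      rw [hcard, Finset.card_pair hab] at this
      omega
    obtain ⟨z, hzf, hznab⟩ := Finset.not_subset.mp hnsub
    simp only [Finset.mem_insert, Finset.mem_singleton, not_or] at hznab
    refine ⟨z, ?_, ?_⟩
    · simp only [Finset.mem_filter, Finset.mem_univ, true_and]
      refine ⟨hznab.1, hznab.2, ?_⟩
      have hfe : ({a, b, z} : Finset (Fin n)) = f := by
        apply Finset.eq_of_subset_of_card_le
        · intro w hw
          simp at hw
          rcases hw with h | h | h
          · exact h ▸ hsubf (by simp)
          · exact h ▸ hsubf (by simp)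
          · exact h ▸ hzf
        · rw [hcard, card3' hab (Ne.symm hznab.1) (Ne.symm hznab.2)]
      rw [hfe]; exact hfG
    · apply Finset.eq_of_subset_of_card_le
      · intro w hw
        simp at hw
        rcases hw with h | h | h
        · exact h ▸ hsubf (by simp)
        · exact h ▸ hsubf (by simp)
        · exact h ▸ hzf
      · rw [hcard, card3' hab (Ne.symm hznab.1) (Ne.symm hznab.2)]

lemma mem_tBadEdges {n : ℕ} {G : Finset (Finset (Fin n))} {t : ℕ} {a b : Fin n}
    (hab : a ≠ b) :
    ({a, b} : Finset (Fin n)) ∈ tBadEdges G t ↔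
      t < (badTriplesOn G {a, b}).card := by
  simp [tBadEdges, Finset.mem_filter, Finset.mem_powersetCard, Finset.card_pair hab,
    Finset.subset_univ]

lemma triple_rot {α : Type*} [DecidableEq α] (a b c : α) :
    ({a, b, c} : Finset α) = {c, a, b} := by
  ext w; simp; tauto

set_option maxHeartbeats 1000000 in
lemma good_triple {n t : ℕ} {G : Finset (Finset (Fin n))} (hG : TetraClosed G)
    (hn : n > 3 + 3 * t) {a b c : Fin n} (hab : a ≠ b) (hac : a ≠ c) (hbc : b ≠ c)
    (h1 : (badTriplesOn G {a, b}).card ≤ t)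
    (h2 : (badTriplesOn G {a, c}).card ≤ t)
    (h3 : (badTriplesOn G {b, c}).card ≤ t) :
    ({a, b, c} : Finset (Fin n)) ∈ G := by
  set Bab := Finset.univ.filter
    (fun z => z ≠ a ∧ z ≠ b ∧ ({a, b, z} : Finset (Fin n)) ∉ G) with hBab
  set Bac := Finset.univ.filter
    (fun z => z ≠ a ∧ z ≠ c ∧ ({a, c, z} : Finset (Fin n)) ∉ G) with hBac
  set Bbc := Finset.univ.filter
    (fun z => z ≠ b ∧ z ≠ c ∧ ({b, c, z} : Finset (Fin n)) ∉ G) with hBbc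
  have cab : Bab.card ≤ t := by rw [hBab, ← badTriplesOn_card hab]; exact h1
  have cac : Bac.card ≤ t := by rw [hBac, ← badTriplesOn_card hac]; exact h2
  have cbc : Bbc.card ≤ t := by rw [hBbc, ← badTriplesOn_card hbc]; exact h3
  set S : Finset (Fin n) := Bab ∪ Bac ∪ Bbc ∪ {a, b, c} with hS
  have cS : S.card < n := by
    calc S.card ≤ Bab.card + Bac.card + Bbc.card + ({a, b, c} : Finset (Fin n)).card := by
          apply le_trans (Finset.card_union_le _ _)
          have := Finset.card_union_le (Bab ∪ Bac) Bbc
          have := Finset.card_union_le Bab Bac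
          omega
      _ ≤ t + t + t + 3 := by
          have : ({a, b, c} : Finset (Fin n)).card = 3 := card3' hab hac hbc
          omega
      _ < n := by omega
  have : ∃ z : Fin n, z ∉ S := by
    by_contra h
    push_neg at h
    have : (Finset.univ : Finset (Fin n)) ⊆ S := fun z _ => h z
    have := Finset.card_le_card this
    simp [Finset.card_univ] at this
    omega
  obtain ⟨z, hz⟩ := this
  rw [hS] at hz
  simp only [Finset.mem_union, Finset.mem_insert, Finset.mem_singleton, not_or] at hz
  obtain ⟨⟨⟨hz1, hz2⟩, hz3⟩, hza, hzb, hzc⟩ := hz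
  rw [hBab] at hz1; rw [hBac] at hz2; rw [hBbc] at hz3
  simp only [Finset.mem_filter, Finset.mem_univ, true_and, not_and, not_not] at hz1 hz2 hz3
  have g1 : ({a, b, z} : Finset (Fin n)) ∈ G := hz1 hza hzb
  have g2 : ({a, c, z} : Finset (Fin n)) ∈ G := hz2 hza hzc
  have g3 : ({b, c, z} : Finset (Fin n)) ∈ G := hz3 hzb hzc
  have e1 : ({a, b, z} : Finset (Fin n)) = {z, a, b} := by ext w; simp; tauto
  have e2 : ({a, c, z} : Finset (Fin n)) = {z, a, c} := by ext w; simp; tauto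
  have e3 : ({b, c, z} : Finset (Fin n)) = {z, b, c} := by ext w; simp; tauto
  rw [e1] at g1; rw [e2] at g2; rw [e3] at g3
  exact tetra_step hG hza hzb hzc hab hac hbc g1 g2 g3

set_option maxHeartbeats 1000000 in
lemma Bcard_le {n t s : ℕ} {G : Finset (Finset (Fin n))} {w : Fin n}
    (hw : badEdgeDegree G t w ≤ s) :
    (Finset.univ.filter
      (fun z => z ≠ w ∧ ({w, z} : Finset (Fin n)) ∈ tBadEdges G t)).card ≤ s := by
  refine le_trans ?_ hw
  apply Finset.card_le_card_of_injOn (fun z => ({w, z} : Finset (Fin n)))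
  · intro z hz
    simp only [Finset.mem_coe, Finset.mem_filter, Finset.mem_univ, true_and] at hz
    simp only [Finset.mem_coe, Finset.mem_filter]
    exact ⟨hz.2, by simp⟩
  · intro z1 h1 z2 h2 heq
    simp only [Finset.coe_filter, Finset.mem_univ, true_and, Set.mem_setOf_eq] at h1 h2
    simp only at heq
    have : z1 ∈ ({w, z2} : Finset (Fin n)) := by rw [← heq]; simp
    simp at this
    rcases this with h | h
    · exact absurd h h1.1
    · exact h


set_option maxHeartbeats 1000000 in
/-- Claim 3.4(3): if `n > 3 + 3t` and `3s + 1 ≤ t`, `G` is tetra-closed,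
`x, y, v` are distinct `s`-good vertices such that the edges `{v, x}` and
`{v, y}` are `t`-good and `{v, x, y} ∈ G`, then the edge `{x, y}` is `t`-good. -/
theorem good_edge_propagation (n t s : ℕ) (G : Finset (Finset (Fin n)))
    (hGtriples : ∀ f ∈ G, f.card = 3) (hG : TetraClosed G)
    (hn : n > 3 + 3 * t) (hst : 3 * s + 1 ≤ t)
    (x y v : Fin n) (hxy : x ≠ y) (hxv : x ≠ v) (hyv : y ≠ v)
    (hxgood : badEdgeDegree G t x ≤ s)
    (hygood : badEdgeDegree G t y ≤ s)
    (hvgood : badEdgeDegree G t v ≤ s)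
    (hvx : (badTriplesOn G {v, x}).card ≤ t)
    (hvy : (badTriplesOn G {v, y}).card ≤ t)
    (hvxy : ({v, x, y} : Finset (Fin n)) ∈ G) :
    (badTriplesOn G {x, y}).card ≤ t := by
  by_contra hbad
  push_neg at hbad
  rw [badTriplesOn_card hxy] at hbad
  set Z := Finset.univ.filter
    (fun z => z ≠ x ∧ z ≠ y ∧ ({x, y, z} : Finset (Fin n)) ∉ G) with hZ
  set Bx := Finset.univ.filter
    (fun z => z ≠ x ∧ ({x, z} : Finset (Fin n)) ∈ tBadEdges G t) with hBx
  set By := Finset.univ.filter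
    (fun z => z ≠ y ∧ ({y, z} : Finset (Fin n)) ∈ tBadEdges G t) with hBy
  set Bv := Finset.univ.filter
    (fun z => z ≠ v ∧ ({v, z} : Finset (Fin n)) ∈ tBadEdges G t) with hBv
  have cbx : Bx.card ≤ s := Bcard_le hxgood
  have cby : By.card ≤ s := Bcard_le hygood
  have cbv : Bv.card ≤ s := Bcard_le hvgood
  have hsub : Z.erase v ⊆ Bx ∪ By ∪ Bv := by
    intro z hz
    rw [Finset.mem_erase, hZ] at hz
    obtain ⟨hzv, hz⟩ := hz
    simp only [Finset.mem_filter, Finset.mem_univ, true_and] at hz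
    obtain ⟨hzx, hzy, hzG⟩ := hz
    by_contra hzn
    simp only [Finset.mem_union, not_or, hBx, hBy, hBv, Finset.mem_filter,
      Finset.mem_univ, true_and, not_and] at hzn
    obtain ⟨⟨h1, h2⟩, h3⟩ := hzn
    have ex : (badTriplesOn G {x, z}).card ≤ t := by
      by_contra h
      push_neg at h
      exact h1 hzx ((mem_tBadEdges (Ne.symm hzx)).mpr h)
    have ey : (badTriplesOn G {y, z}).card ≤ t := by
      by_contra h
      push_neg at h
      exact h2 hzy ((mem_tBadEdges (Ne.symm hzy)).mpr h)
    have ev : (badTriplesOn G {v, z}).card ≤ t := by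
      by_contra h
      push_neg at h
      exact h3 hzv ((mem_tBadEdges (Ne.symm hzv)).mpr h)
    have g1 : ({v, x, z} : Finset (Fin n)) ∈ G :=
      good_triple hG hn (Ne.symm hxv) (Ne.symm hzv) (Ne.symm hzx) hvx ev ex
    have g2 : ({v, y, z} : Finset (Fin n)) ∈ G :=
      good_triple hG hn (Ne.symm hyv) (Ne.symm hzv) (Ne.symm hzy) hvy ev ey
    exact hzG (tetra_step hG (Ne.symm hxv) (Ne.symm hyv) (Ne.symm hzv) hxy
      (Ne.symm hzx) (Ne.symm hzy) hvxy g1 g2)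
  have hZcard : Z.card - 1 ≤ (Z.erase v).card := Finset.pred_card_le_card_erase
  have hucard : (Bx ∪ By ∪ Bv).card ≤ 3 * s := by
    have u1 := Finset.card_union_le (Bx ∪ By) Bv
    have u2 := Finset.card_union_le Bx By
    omega
  have := Finset.card_le_card hsub
  omega
end

section
/- Fix n ∈ ℕ and a tetra-closed set G of triples of Fin n. Let W be a subset of Fin n, let v ∉ W, and suppose that every 3-element subset of W belongs to G. Consider the simple graph on W in which distinct x, y ∈ W are adjacent if and only if {v,x,y} ∈ G. If every two vertices of W are connected by a path in this graph, then {v,x,y} ∈ G for all distinct x, y ∈ W. -/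
/-- The simple graph on `W` (viewed inside `Fin n`) in which distinct
`x, y ∈ W` are adjacent if and only if `{v, x, y} ∈ G`. -/
def linkGraph {n : ℕ} (G : Finset (Finset (Fin n))) (v : Fin n)
    (W : Finset (Fin n)) : SimpleGraph (Fin n) where
  Adj x y := x ≠ y ∧ x ∈ W ∧ y ∈ W ∧ ({v, x, y} : Finset (Fin n)) ∈ G
  symm := by
    constructor
    rintro x y ⟨hxy, hx, hy, hG⟩
    refine ⟨hxy.symm, hy, hx, ?_⟩
    have h : ({v, y, x} : Finset (Fin n)) = {v, x, y} := by
      rw [Finset.pair_comm y x]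
    rw [h]
    exact hG
  loopless := by constructor; rintro x ⟨h, -⟩; exact h rfl


private lemma key_walk {n : ℕ} {G : Finset (Finset (Fin n))} (hG : TetraClosed G)
    {W : Finset (Fin n)} {u : Fin n} (hu : u ∉ W)
    (hW : ∀ f ⊆ W, f.card = 3 → f ∈ G) :
    ∀ x y : Fin n, (linkGraph G u W).Walk x y → x ∈ W → y ∈ W → x ≠ y →
      ({u, x, y} : Finset (Fin n)) ∈ G := by
  intro x y w
  induction w with
  | nil => intro _ _ h; exact absurd rfl h
  | @cons x z y hadj w ih =>
    intro hx hy hxy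
    obtain ⟨hxz, _, hz, hxzG⟩ := hadj
    by_cases hzy : z = y
    · subst hzy; exact hxzG
    · have hzyG : ({u, z, y} : Finset (Fin n)) ∈ G := ih hz hy hzy
      have hux : u ≠ x := fun h => hu (h ▸ hx)
      have huz : u ≠ z := fun h => hu (h ▸ hz)
      have huy : u ≠ y := fun h => hu (h ▸ hy)
      set s : Finset (Fin n) := {u, x, z, y} with hs
      have hnotmem : u ∉ ({x, z, y} : Finset (Fin n)) := by simp [hux, huz, huy]
      have hcard : s.card = 4 := by
        rw [hs, Finset.card_insert_of_notMem hnotmem,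
          Finset.card_insert_of_notMem (by simp [hxz, hxy]),
          Finset.card_insert_of_notMem (by simp [hzy])]
        simp
      have hxyz : ({x, z, y} : Finset (Fin n)) ∈ G := by
        apply hW _ (by intro a ha; simp only [Finset.mem_insert,
          Finset.mem_singleton] at ha; rcases ha with h|h|h <;> subst h <;> assumption)
        rw [Finset.card_insert_of_notMem (by simp [hxz, hxy]),
          Finset.card_insert_of_notMem (by simp [hzy])]
        simp
      have he_u : s.erase u = {x, z, y} := by
        rw [hs, Finset.erase_insert hnotmem]
      have he_x : s.erase x = {u, z, y} := by
        rw [hs, Finset.erase_insert_of_ne hux,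
          Finset.erase_insert (by simp [hxz, hxy])]
      have he_z : s.erase z = {u, x, y} := by
        rw [hs, Finset.erase_insert_of_ne huz, Finset.erase_insert_of_ne hxz,
          Finset.erase_insert (by simp [hzy])]
      have he_y : s.erase y = {u, x, z} := by
        rw [hs, Finset.erase_insert_of_ne huy, Finset.erase_insert_of_ne hxy,
          Finset.erase_insert_of_ne hzy, Finset.erase_singleton]
        simp
      apply hG s hcard
      · simp only [Finset.mem_powersetCard]
        refine ⟨?_, ?_⟩
        · intro a ha
          simp only [Finset.mem_insert, Finset.mem_singleton] at ha
          rcases ha with h|h|h <;> subst h <;> simp [hs]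
        · rw [Finset.card_insert_of_notMem (by simp [hux, huy]),
            Finset.card_insert_of_notMem (by simp [hxy])]
          simp
      · intro g hg hne
        rw [Finset.mem_powersetCard] at hg
        obtain ⟨hgs, hg3⟩ := hg
        have hdiff : (s \ g).Nonempty := by
          rw [← Finset.card_pos, Finset.card_sdiff_of_subset hgs, hcard, hg3]; norm_num
        obtain ⟨a, ha⟩ := hdiff
        rw [Finset.mem_sdiff] at ha
        have hasub : g ⊆ s.erase a := fun b hb =>
          Finset.mem_erase.2 ⟨fun h => ha.2 (h ▸ hb), hgs hb⟩
        have hgeq : g = s.erase a := by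
          apply Finset.eq_of_subset_of_card_le hasub
          rw [Finset.card_erase_of_mem ha.1, hcard, hg3]
        subst hgeq
        have has := ha.1
        rw [hs] at has
        simp only [Finset.mem_insert, Finset.mem_singleton] at has
        rcases has with h|h|h|h <;> subst h
        · rw [he_u]; exact hxyz
        · rw [he_x]; exact hzyG
        · rw [he_z] at hne; exact absurd rfl hne
        · rw [he_y]; exact hxzG

/-- The key step in the proof of Lemma 3.8: if `G` is tetra-closed, every
triple inside `W` belongs to `G`, `v ∉ W`, and the link graph of `v` on `W`
is connected (every two vertices of `W` are joined by a path), then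
`{v, x, y} ∈ G` for all distinct `x, y ∈ W`. -/
theorem link_connected_all_good (n : ℕ) (G : Finset (Finset (Fin n)))
    (hGtriples : ∀ f ∈ G, f.card = 3) (hG : TetraClosed G)
    (W : Finset (Fin n)) (v : Fin n) (hv : v ∉ W)
    (hW : ∀ f ⊆ W, f.card = 3 → f ∈ G)
    (hconn : ∀ x ∈ W, ∀ y ∈ W, (linkGraph G v W).Reachable x y) :
    ∀ x ∈ W, ∀ y ∈ W, x ≠ y → ({v, x, y} : Finset (Fin n)) ∈ G := by
  intro x hx y hy hxy
  obtain ⟨w⟩ := hconn x hx y hy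
  exact key_walk hG hv hW x y w hx hy hxy
end

section
/- Fix n ∈ ℕ, a tetra-closed set G of triples of Fin n, and thresholds t, s ∈ ℕ with n > 3 + 3t. Suppose that the number of s-bad vertices is at most a, and the number of t-bad edges both of whose endpoints are s-good is at most b. Then there exists a subset W of Fin n with |W| ≥ n − a − 2b such that every 3-element subset of W belongs to G. -/
/-- Corollary 3.6 (deterministic content): if `n > 3 + 3t`, `G` is
tetra-closed, there are at most `a` `s`-bad vertices and at most `b` `t`-bad
edges both of whose endpoints are `s`-good, then there is a subset `W` of
`Fin n` with `|W| ≥ n − a − 2b` all of whose triples belong to `G`. -/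
theorem exists_good_core (n t s a b : ℕ) (G : Finset (Finset (Fin n)))
    (hGtriples : ∀ f ∈ G, f.card = 3) (hG : TetraClosed G)
    (hn : n > 3 + 3 * t)
    (ha : ((Finset.univ : Finset (Fin n)).filter
        (fun v => s < badEdgeDegree G t v)).card ≤ a)
    (hb : ((tBadEdges G t).filter
        (fun e => ∀ v ∈ e, badEdgeDegree G t v ≤ s)).card ≤ b) :
    ∃ W : Finset (Fin n), n - a - 2 * b ≤ W.card ∧
      ∀ f ⊆ W, f.card = 3 → f ∈ G := by
  classical
  set B := ((Finset.univ : Finset (Fin n)).filter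
      (fun v => s < badEdgeDegree G t v)) with hBdef
  set E := ((tBadEdges G t).filter
      (fun e => ∀ v ∈ e, badEdgeDegree G t v ≤ s)) with hEdef
  set W := (Finset.univ : Finset (Fin n)) \ (B ∪ E.biUnion id) with hWdef
  -- all edges inside W are t-good
  have hedge : ∀ e : Finset (Fin n), e ⊆ W → e.card = 2 →
      (badTriplesOn G e).card ≤ t := by
    intro e heW he2
    by_contra h
    push_neg at h
    have heBad : e ∈ tBadEdges G t := by
      refine Finset.mem_filter.2 ⟨Finset.mem_powersetCard.2 ⟨Finset.subset_univ _, he2⟩, h⟩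
    have hgood : ∀ v ∈ e, badEdgeDegree G t v ≤ s := by
      intro v hv
      have hvW := heW hv
      rw [hWdef] at hvW
      have := (Finset.mem_sdiff.1 hvW).2
      rw [Finset.mem_union] at this
      push_neg at this
      have hvB := this.1
      rw [hBdef, Finset.mem_filter] at hvB
      push_neg at hvB
      exact hvB (Finset.mem_univ v)
    have heE : e ∈ E := Finset.mem_filter.2 ⟨heBad, hgood⟩
    obtain ⟨v, hv⟩ := Finset.card_pos.1 (by omega : 0 < e.card)
    have hvW := heW hv
    rw [hWdef] at hvW
    have := (Finset.mem_sdiff.1 hvW).2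
    exact this (Finset.mem_union_right _ (Finset.mem_biUnion.2 ⟨e, heE, hv⟩))
  refine ⟨W, ?_, ?_⟩
  · -- cardinality bound
    have h2 : (E.biUnion id).card ≤ 2 * b := by
      calc (E.biUnion id).card ≤ ∑ e ∈ E, (id e).card := Finset.card_biUnion_le
        _ = ∑ _e ∈ E, 2 := by
            refine Finset.sum_congr rfl fun e he => ?_
            have h1 : e ∈ tBadEdges G t := (Finset.mem_filter.1 he).1
            have h2 := (Finset.mem_filter.1 h1).1
            exact (Finset.mem_powersetCard.1 h2).2
        _ = 2 * E.card := by rw [Finset.sum_const, smul_eq_mul, mul_comm]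
        _ ≤ 2 * b := Nat.mul_le_mul_left 2 hb
    have hcup : (B ∪ E.biUnion id).card ≤ a + 2 * b :=
      le_trans (Finset.card_union_le _ _) (Nat.add_le_add ha h2)
    have hWcard : W.card = n - (B ∪ E.biUnion id).card := by
      rw [hWdef, Finset.card_sdiff_of_subset (Finset.subset_univ _), Finset.card_univ,
        Fintype.card_fin]
    omega
  · -- every triple inside W is good
    intro f hfW hf3
    by_contra hfG
    -- set of w outside f giving a bad extension triple
    set Bad := (Finset.univ \ f).filter
        (fun w => ∃ e ∈ f.powersetCard 2, insert w e ∉ G) with hBaddef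
    have hBadcard : Bad.card ≤ 3 * t := by
      have hsub : Bad ⊆ (f.powersetCard 2).biUnion
          (fun e => (Finset.univ \ f).filter (fun w => insert w e ∉ G)) := by
        intro w hw
        rw [hBaddef, Finset.mem_filter] at hw
        obtain ⟨hw1, e, he, hbad⟩ := hw
        exact Finset.mem_biUnion.2 ⟨e, he, Finset.mem_filter.2 ⟨hw1, hbad⟩⟩
      have hper : ∀ e ∈ f.powersetCard 2,
          ((Finset.univ \ f).filter (fun w => insert w e ∉ G)).card ≤ t := by
        intro e he
        rw [Finset.mem_powersetCard] at he
        refine le_trans ?_ (hedge e (he.1.trans hfW) he.2)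
        apply Finset.card_le_card_of_injOn (fun w => insert w e)
        · intro w hw
          rw [Finset.mem_coe, Finset.mem_filter] at hw
          have hwf : w ∉ f := (Finset.mem_sdiff.1 hw.1).2
          have hwe : w ∉ e := fun h => hwf (he.1 h)
          refine Finset.mem_filter.2 ⟨Finset.mem_powersetCard.2
            ⟨Finset.subset_univ _, ?_⟩, Finset.subset_insert _ _, hw.2⟩
          rw [Finset.card_insert_of_notMem hwe, he.2]
        · intro w hw w' hw' hww
          rw [Finset.coe_filter] at hw hw'
          have hwe : w ∉ e := fun h => (Finset.mem_sdiff.1 hw.1).2 (he.1 h)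
          have hw'e : w' ∉ e := fun h => (Finset.mem_sdiff.1 hw'.1).2 (he.1 h)
          have hww' : insert w e = insert w' e := hww
          have : w ∈ insert w' e := hww' ▸ Finset.mem_insert_self w e
          rcases Finset.mem_insert.1 this with h | h
          · exact h
          · exact absurd h hwe
      calc Bad.card ≤ ∑ e ∈ f.powersetCard 2,
            ((Finset.univ \ f).filter (fun w => insert w e ∉ G)).card :=
          le_trans (Finset.card_le_card hsub) Finset.card_biUnion_le
        _ ≤ ∑ _e ∈ f.powersetCard 2, t := Finset.sum_le_sum hper
        _ = 3 * t := by
            rw [Finset.sum_const, smul_eq_mul, Finset.card_powersetCard, hf3]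
            norm_num [Nat.choose]
    -- find a good extension vertex
    have hcompl : (Finset.univ \ f).card = n - 3 := by
      rw [Finset.card_sdiff_of_subset (Finset.subset_univ _), Finset.card_univ,
        Fintype.card_fin, hf3]
    have hne : ¬ (Finset.univ \ f ⊆ Bad) := by
      intro h
      have := Finset.card_le_card h
      omega
    obtain ⟨w, hw1, hw2⟩ := Finset.not_subset.1 hne
    have hwf : w ∉ f := (Finset.mem_sdiff.1 hw1).2
    have hwgood : ∀ e ∈ f.powersetCard 2, insert w e ∈ G := by
      intro e he
      by_contra h
      exact hw2 (Finset.mem_filter.2 ⟨hw1, e, he, h⟩)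
    -- apply tetra-closedness to insert w f
    have hs4 : (insert w f).card = 4 := by
      rw [Finset.card_insert_of_notMem hwf, hf3]
    have hfmem : f ∈ (insert w f).powersetCard 3 :=
      Finset.mem_powersetCard.2 ⟨Finset.subset_insert _ _, hf3⟩
    refine hfG (hG (insert w f) hs4 f hfmem ?_)
    intro g hg hgf
    rw [Finset.mem_powersetCard] at hg
    have hwg : w ∈ g := by
      by_contra hwg
      have hgsub : g ⊆ f := fun x hx => by
        rcases Finset.mem_insert.1 (hg.1 hx) with h | h
        · exact absurd (h ▸ hx) hwg
        · exact h
      exact hgf (Finset.eq_of_subset_of_card_le hgsub (by omega))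
    have hge : g = insert w (g.erase w) := (Finset.insert_erase hwg).symm
    have hesub : g.erase w ⊆ f := by
      intro x hx
      have hxw := Finset.ne_of_mem_erase hx
      rcases Finset.mem_insert.1 (hg.1 (Finset.mem_of_mem_erase hx)) with h | h
      · exact absurd h hxw
      · exact h
    have hecard : (g.erase w).card = 2 := by
      rw [Finset.card_erase_of_mem hwg, hg.2]
    rw [hge]
    exact hwgood _ (Finset.mem_powersetCard.2 ⟨hesub, hecard⟩)
end

section
/- Fix n ∈ ℕ and m ≥ 1. The number of sets E of m edges of Fin n such that the graph whose vertex set is the set of endpoints of edges of E and whose edge set is E is connected, is at most n²·(2mn)^{m−1}. -/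
/-- The graph associated with a set `E` of edges (2-element subsets) of
`Fin n`: distinct `x` and `y` are adjacent if and only if `{x, y} ∈ E`. -/
def edgeGraph {n : ℕ} (E : Finset (Finset (Fin n))) : SimpleGraph (Fin n) where
  Adj x y := x ≠ y ∧ ({x, y} : Finset (Fin n)) ∈ E
  symm := by
    constructor
    rintro x y ⟨hxy, he⟩
    exact ⟨hxy.symm, by rwa [Finset.pair_comm]⟩
  loopless := by constructor; rintro x ⟨h, -⟩; exact h rfl

lemma edgeGraph_adj {n : ℕ} (E : Finset (Finset (Fin n))) (x y : Fin n) :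
    (edgeGraph E).Adj x y ↔ x ≠ y ∧ ({x, y} : Finset (Fin n)) ∈ E := Iff.rfl

/-- Non-dependent version of `Fin.snoc`. -/
def msnoc {α : Type*} {k : ℕ} (g : Fin k → α) (e : α) : Fin (k + 1) → α :=
  fun i => if h : (i : ℕ) < k then g ⟨i, h⟩ else e

lemma msnoc_lt {α : Type*} {k : ℕ} (g : Fin k → α) (e : α) (i : Fin (k + 1))
    (h : (i : ℕ) < k) : msnoc g e i = g ⟨i, h⟩ := dif_pos h

lemma msnoc_eq {α : Type*} {k : ℕ} (g : Fin k → α) (e : α) (i : Fin (k + 1))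
    (h : (i : ℕ) = k) : msnoc g e i = e := dif_neg (by omega)

lemma msnoc_restrict_self {α : Type*} {k : ℕ} (G : Fin (k + 1) → α) :
    msnoc (fun i : Fin k => G i.castSucc) (G (Fin.last k)) = G := by
  funext i
  by_cases h : (i : ℕ) < k
  · rw [msnoc_lt _ _ _ h]
    exact congrArg G (by ext; simp)
  · have hik : (i : ℕ) = k := by omega
    rw [msnoc_eq _ _ _ hik]
    exact congrArg G (by ext; simp [hik])

open Classical in
/-- "Good sequences": sequences of `m` edges, pairwise distinct, each of size 2,
such that every edge except the first shares a vertex with an earlier edge. -/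
noncomputable def goodSeqs (n m : ℕ) : Finset (Fin m → Finset (Fin n)) :=
  Finset.univ.filter fun g => Function.Injective g ∧ (∀ i, (g i).card = 2) ∧
    ∀ i : Fin m, 0 < (i : ℕ) → ∃ j : Fin m, j < i ∧ (g i ∩ g j).Nonempty

lemma mem_goodSeqs {n m : ℕ} {g : Fin m → Finset (Fin n)} :
    g ∈ goodSeqs n m ↔ Function.Injective g ∧ (∀ i, (g i).card = 2) ∧
      ∀ i : Fin m, 0 < (i : ℕ) → ∃ j : Fin m, j < i ∧ (g i ∩ g j).Nonempty := by
  simp [goodSeqs]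

/-- If `C` is a nonempty proper subfamily of a connected edge family `E`, then some
edge of `E \ C` shares a vertex with an edge of `C`. -/
lemma exists_crossing {n : ℕ} {E C : Finset (Finset (Fin n))}
    (hE2 : ∀ e ∈ E, e.card = 2)
    (hconn : ∀ x y : Fin n, (∃ e ∈ E, x ∈ e) → (∃ e ∈ E, y ∈ e) →
        (edgeGraph E).Reachable x y)
    (hCE : C ⊆ E) (hC : C.Nonempty) (hne : ∃ e ∈ E, e ∉ C) :
    ∃ e ∈ E, e ∉ C ∧ ∃ a ∈ e, ∃ c ∈ C, a ∈ c := by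
  obtain ⟨f, hf⟩ := hC
  obtain ⟨e', he'E, he'C⟩ := hne
  have hf2 : f.card = 2 := hE2 f (hCE hf)
  obtain ⟨x, hx⟩ := Finset.card_pos.mp (by omega : 0 < f.card)
  obtain ⟨y, hy⟩ := Finset.card_pos.mp (by rw [hE2 e' he'E]; omega : 0 < e'.card)
  have hr := hconn x y ⟨f, hCE hf, hx⟩ ⟨e', he'E, hy⟩
  suffices key : ∀ (u v : Fin n) (_ : (edgeGraph E).Walk u v), (∃ c ∈ C, u ∈ c) →
      (∃ e ∈ E, e ∉ C ∧ ∃ a ∈ e, ∃ c ∈ C, a ∈ c) ∨ (∃ c ∈ C, v ∈ c) by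
    obtain ⟨w⟩ := hr
    rcases key x y w ⟨f, hf, hx⟩ with h | ⟨c, hc, hyc⟩
    · exact h
    · exact ⟨e', he'E, he'C, y, hy, c, hc, hyc⟩
  intro u v w
  induction w with
  | nil => exact fun hu => Or.inr hu
  | @cons a b c h p ih =>
    intro hu
    have hmemE : ({a, b} : Finset (Fin n)) ∈ E := h.2
    by_cases hmemC : ({a, b} : Finset (Fin n)) ∈ C
    · exact ih ⟨{a, b}, hmemC, by simp⟩
    · exact Or.inl ⟨{a, b}, hmemE, hmemC, a, by simp, hu⟩

/-- Every connected edge family of size `m` admits a good ordering. -/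
lemma exists_goodSeq {n m : ℕ} {E : Finset (Finset (Fin n))}
    (hcard : E.card = m) (hm : 1 ≤ m) (hE2 : ∀ e ∈ E, e.card = 2)
    (hconn : ∀ x y : Fin n, (∃ e ∈ E, x ∈ e) → (∃ e ∈ E, y ∈ e) →
        (edgeGraph E).Reachable x y) :
    ∃ g ∈ goodSeqs n m, Finset.image g Finset.univ = E := by
  classical
  have key : ∀ k, k ≤ m → ∃ g : Fin k → Finset (Fin n),
      (∀ i, g i ∈ E) ∧ Function.Injective g ∧
      ∀ i : Fin k, 0 < (i : ℕ) → ∃ j : Fin k, j < i ∧ (g i ∩ g j).Nonempty := by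
    intro k
    induction k with
    | zero =>
      exact fun _ => ⟨fun i => i.elim0, fun i => i.elim0, fun i => i.elim0,
        fun i => i.elim0⟩
    | succ k ih =>
      intro hk
      obtain ⟨g, hgE, hginj, hggood⟩ := ih (Nat.le_of_succ_le hk)
      set C : Finset (Finset (Fin n)) := Finset.image g Finset.univ with hCdef
      have hCcard : C.card = k := by
        rw [hCdef, Finset.card_image_of_injective _ hginj, Finset.card_univ,
          Fintype.card_fin]
      have hCE : C ⊆ E := by
        intro c hc
        obtain ⟨i, -, rfl⟩ := Finset.mem_image.mp hc
        exact hgE i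
      have hne : ∃ e ∈ E, e ∉ C := by
        by_contra hcon
        push_neg at hcon
        have : E ⊆ C := hcon
        have := Finset.card_le_card this
        omega
      rcases Nat.eq_zero_or_pos k with hk0 | hkpos
      · subst hk0
        obtain ⟨e, heE, -⟩ := hne
        refine ⟨fun _ => e, fun _ => heE, fun i j _ => Fin.ext (by omega), ?_⟩
        intro i hi
        have : (i : ℕ) = 0 := by omega
        omega
      · have hCne : C.Nonempty := Finset.card_pos.mp (by omega)
        obtain ⟨e, heE, heC, a, hae, c, hcC, hac⟩ :=
          exists_crossing hE2 hconn hCE hCne hne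
        obtain ⟨j0, -, hj0⟩ := Finset.mem_image.mp hcC
        refine ⟨msnoc g e, ?_, ?_, ?_⟩
        · intro i
          by_cases h : (i : ℕ) < k
          · rw [msnoc_lt _ _ _ h]; exact hgE _
          · rw [msnoc_eq _ _ _ (by omega)]; exact heE
        · intro i j hij
          by_cases hi : (i : ℕ) < k <;> by_cases hj : (j : ℕ) < k
          · rw [msnoc_lt _ _ _ hi, msnoc_lt _ _ _ hj] at hij
            have h' := hginj hij
            exact Fin.ext (by simpa [Fin.ext_iff] using h')
          · rw [msnoc_lt _ _ _ hi, msnoc_eq _ _ _ (by omega)] at hij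
            exact absurd (hCdef ▸ Finset.mem_image.mpr ⟨_, Finset.mem_univ _, rfl⟩)
              (hij ▸ heC)
          · rw [msnoc_eq _ _ _ (by omega), msnoc_lt _ _ _ hj] at hij
            exact absurd (hCdef ▸ Finset.mem_image.mpr ⟨_, Finset.mem_univ _, rfl⟩)
              (hij.symm ▸ heC)
          · exact Fin.ext (by omega)
        · intro i hi
          by_cases h : (i : ℕ) < k
          · obtain ⟨j, hji, hnon⟩ := hggood ⟨i, h⟩ (by simpa using hi)
            have hjlt : (j : ℕ) < k + 1 := by omega
            refine ⟨⟨(j : ℕ), hjlt⟩, ?_, ?_⟩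
            · have : (j : ℕ) < (i : ℕ) := hji
              exact this
            · rw [msnoc_lt _ _ _ h, msnoc_lt _ _ ⟨(j : ℕ), hjlt⟩ j.isLt]
              simpa using hnon
          · refine ⟨⟨(j0 : ℕ), by omega⟩, ?_, ?_⟩
            · show ((j0 : ℕ)) < (i : ℕ)
              omega
            · rw [msnoc_eq _ _ _ (by omega), msnoc_lt _ _ ⟨(j0 : ℕ), by omega⟩ j0.isLt]
              refine ⟨a, Finset.mem_inter.mpr ⟨hae, ?_⟩⟩
              have : g ⟨(j0 : ℕ), j0.isLt⟩ = g j0 := by congr 1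
              rw [this, hj0]
              exact hac
  obtain ⟨g, hgE, hginj, hggood⟩ := key m le_rfl
  have himg : Finset.image g Finset.univ = E := by
    apply Finset.eq_of_subset_of_card_le
    · intro c hc
      obtain ⟨i, -, rfl⟩ := Finset.mem_image.mp hc
      exact hgE i
    · rw [Finset.card_image_of_injective _ hginj, Finset.card_univ, Fintype.card_fin,
        hcard]
  exact ⟨g, mem_goodSeqs.mpr ⟨hginj, fun i => hE2 _ (hgE i), hggood⟩, himg⟩

open Classical in
/-- Possible extensions of a good sequence: 2-element sets meeting some edge of `g`. -/
noncomputable def exts {n m : ℕ} (g : Fin m → Finset (Fin n)) : Finset (Finset (Fin n)) :=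
  Finset.univ.filter fun e => e.card = 2 ∧ ∃ j : Fin m, (e ∩ g j).Nonempty

lemma exts_card_le {n m : ℕ} (hn : 0 < n) (g : Fin m → Finset (Fin n))
    (hg2 : ∀ i, (g i).card = 2) : (exts g).card ≤ 2 * m * n := by
  classical
  haveI : Inhabited (Fin n) := ⟨⟨0, hn⟩⟩
  set V : Finset (Fin n) := Finset.univ.biUnion g with hV
  have hVcard : V.card ≤ 2 * m := by
    calc V.card ≤ ∑ i : Fin m, (g i).card := Finset.card_biUnion_le
    _ = 2 * m := by simp [hg2]; ring
  have hmain : (exts g).card ≤ (V ×ˢ (Finset.univ : Finset (Fin n))).card := by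
    apply Finset.card_le_card_of_injOn (fun e =>
      if h : (e ∩ V).Nonempty then
        ((e ∩ V).min' h,
          if h2 : (e.erase ((e ∩ V).min' h)).Nonempty then
            (e.erase ((e ∩ V).min' h)).min' h2 else default)
      else (default, default))
    · intro e he
      simp only [exts, Finset.mem_coe, Finset.mem_filter] at he
      obtain ⟨-, -, j, hj⟩ := he
      have hne : (e ∩ V).Nonempty := by
        refine hj.mono (Finset.inter_subset_inter le_rfl ?_)
        exact Finset.subset_biUnion_of_mem g (Finset.mem_univ j)
      beta_reduce
      rw [dif_pos hne]
      exact Finset.mem_product.mpr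
        ⟨(Finset.mem_inter.mp ((e ∩ V).min'_mem hne)).2, Finset.mem_univ _⟩
    · intro e he e' he' heq
      simp only [exts, Finset.coe_filter, Set.mem_setOf_eq] at he he'
      obtain ⟨-, he2, j, hj⟩ := he
      obtain ⟨-, he2', j', hj'⟩ := he'
      have hne : (e ∩ V).Nonempty := by
        refine hj.mono (Finset.inter_subset_inter le_rfl ?_)
        exact Finset.subset_biUnion_of_mem g (Finset.mem_univ j)
      have hne' : (e' ∩ V).Nonempty := by
        refine hj'.mono (Finset.inter_subset_inter le_rfl ?_)
        exact Finset.subset_biUnion_of_mem g (Finset.mem_univ j')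
      simp only at heq
      rw [dif_pos hne, dif_pos hne'] at heq
      -- canonical pair description
      have hdesc : ∀ (f : Finset (Fin n)) (hf2 : f.card = 2) (h : (f ∩ V).Nonempty),
          f = {(f ∩ V).min' h,
            if h2 : (f.erase ((f ∩ V).min' h)).Nonempty then
              (f.erase ((f ∩ V).min' h)).min' h2 else default} := by
        intro f hf2 h
        set a := (f ∩ V).min' h with ha
        have haf : a ∈ f := (Finset.mem_inter.mp ((f ∩ V).min'_mem h)).1
        have hrase : (f.erase a).card = 1 := by
          rw [Finset.card_erase_of_mem haf, hf2]
        have h2 : (f.erase a).Nonempty := Finset.card_pos.mp (by omega)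
        rw [dif_pos h2]
        set b := (f.erase a).min' h2 with hb
        have hbf : b ∈ f.erase a := (f.erase a).min'_mem h2
        have hba : b ≠ a := Finset.ne_of_mem_erase hbf
        have hsub : ({a, b} : Finset (Fin n)) ⊆ f := by
          intro z hz
          rcases Finset.mem_insert.mp hz with rfl | hz
          · exact haf
          · exact Finset.mem_of_mem_erase (Finset.mem_singleton.mp hz ▸ hbf)
        have hcard2 : ({a, b} : Finset (Fin n)).card = 2 :=
          Finset.card_pair (Ne.symm hba)
        exact (Finset.eq_of_subset_of_card_le hsub (by omega)).symm
      rw [Prod.mk.injEq] at heq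
      obtain ⟨ha, hb⟩ := heq
      rw [hdesc e he2 hne, hdesc e' he2' hne', hb, ha]
  calc (exts g).card ≤ (V ×ˢ (Finset.univ : Finset (Fin n))).card := hmain
    _ = V.card * n := by rw [Finset.card_product, Finset.card_univ, Fintype.card_fin]
    _ ≤ 2 * m * n := Nat.mul_le_mul_right n hVcard

lemma goodSeqs_one_card_le (n : ℕ) (hn : 0 < n) : (goodSeqs n 1).card ≤ n ^ 2 := by
  classical
  haveI : Inhabited (Fin n) := ⟨⟨0, hn⟩⟩
  have hmain : (goodSeqs n 1).card ≤
      ((Finset.univ : Finset (Fin n)) ×ˢ (Finset.univ : Finset (Fin n))).card := by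
    apply Finset.card_le_card_of_injOn (fun g : Fin 1 → Finset (Fin n) =>
      if h : (g 0).Nonempty then ((g 0).min' h, (g 0).max' h) else (default, default))
    · intro g _
      exact Finset.mem_product.mpr ⟨Finset.mem_univ _, Finset.mem_univ _⟩
    · intro g hg g' hg' heq
      simp only [Finset.mem_coe, mem_goodSeqs] at hg hg'
      obtain ⟨-, h2, -⟩ := hg
      obtain ⟨-, h2', -⟩ := hg'
      have hne : (g 0).Nonempty := Finset.card_pos.mp (by rw [h2 0]; omega)
      have hne' : (g' 0).Nonempty := Finset.card_pos.mp (by rw [h2' 0]; omega)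
      simp only at heq
      rw [dif_pos hne, dif_pos hne'] at heq
      have hdesc : ∀ (f : Finset (Fin n)) (hf2 : f.card = 2) (h : f.Nonempty),
          f = {f.min' h, f.max' h} := by
        intro f hf2 h
        have hlt : f.min' h < f.max' h := Finset.min'_lt_max'_of_card f (by omega)
        have hsub : ({f.min' h, f.max' h} : Finset (Fin n)) ⊆ f := by
          intro z hz
          rcases Finset.mem_insert.mp hz with rfl | hz
          · exact f.min'_mem h
          · exact Finset.mem_singleton.mp hz ▸ f.max'_mem h
        have hcard2 : ({f.min' h, f.max' h} : Finset (Fin n)).card = 2 :=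
          Finset.card_pair hlt.ne
        exact (Finset.eq_of_subset_of_card_le hsub (by omega)).symm
      rw [Prod.mk.injEq] at heq
      obtain ⟨ha, hb⟩ := heq
      have h00 : g 0 = g' 0 := by
        rw [hdesc (g 0) (h2 0) hne, hdesc (g' 0) (h2' 0) hne', ha, hb]
      funext i
      have : i = 0 := Fin.ext (by omega)
      rw [this, h00]
  calc (goodSeqs n 1).card ≤ _ := hmain
    _ = n ^ 2 := by
      rw [Finset.card_product, Finset.card_univ, Fintype.card_fin]; ring

lemma goodSeqs_succ_card_le (n k : ℕ) (hk : 0 < k) (hn : 0 < n) :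
    (goodSeqs n (k + 1)).card ≤ (goodSeqs n k).card * (2 * k * n) := by
  classical
  have hsub : goodSeqs n (k + 1) ⊆
      (goodSeqs n k).biUnion fun g => (exts g).image (msnoc g) := by
    intro G hG
    rw [mem_goodSeqs] at hG
    obtain ⟨hinj, h2, hgood⟩ := hG
    set g : Fin k → Finset (Fin n) := fun i => G i.castSucc with hgdef
    refine Finset.mem_biUnion.mpr ⟨g, ?_, ?_⟩
    · rw [mem_goodSeqs]
      refine ⟨fun i j hij => ?_, fun i => h2 _, fun i hi => ?_⟩
      · exact Fin.castSucc_injective _ (hinj hij)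
      · obtain ⟨j, hji, hnon⟩ := hgood i.castSucc (by simpa using hi)
        have hjlt : (j : ℕ) < k := by
          have h1 : (j : ℕ) < (i : ℕ) := hji
          omega
        refine ⟨⟨(j : ℕ), hjlt⟩, ?_, ?_⟩
        · show ((j : ℕ)) < (i : ℕ)
          exact hji
        · have hcast : Fin.castSucc (⟨(j : ℕ), hjlt⟩ : Fin k) = j := by
            ext; simp
          show (G i.castSucc ∩ G (Fin.castSucc ⟨(j : ℕ), hjlt⟩)).Nonempty
          rw [hcast]
          exact hnon
    · refine Finset.mem_image.mpr ⟨G (Fin.last k), ?_, msnoc_restrict_self G⟩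
      simp only [exts, Finset.mem_filter]
      refine ⟨Finset.mem_univ _, h2 _, ?_⟩
      obtain ⟨j, hj, hnon⟩ := hgood (Fin.last k) (by simpa using hk)
      have hjk : (j : ℕ) < k := hj
      refine ⟨⟨(j : ℕ), hjk⟩, ?_⟩
      have hcast : Fin.castSucc (⟨(j : ℕ), hjk⟩ : Fin k) = j := by ext; simp
      show (G (Fin.last k) ∩ G (Fin.castSucc ⟨(j : ℕ), hjk⟩)).Nonempty
      rw [hcast]
      exact hnon
  calc (goodSeqs n (k + 1)).card
      ≤ ((goodSeqs n k).biUnion fun g => (exts g).image (msnoc g)).card :=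
        Finset.card_le_card hsub
    _ ≤ ∑ g ∈ goodSeqs n k, ((exts g).image (msnoc g)).card :=
        Finset.card_biUnion_le
    _ ≤ ∑ g ∈ goodSeqs n k, (2 * k * n) := by
        refine Finset.sum_le_sum fun g hg => ?_
        refine le_trans Finset.card_image_le ?_
        exact exts_card_le hn g (mem_goodSeqs.mp hg).2.1
    _ = (goodSeqs n k).card * (2 * k * n) := by
        rw [Finset.sum_const, smul_eq_mul]

lemma goodSeqs_card_le (n : ℕ) (hn : 0 < n) :
    ∀ k : ℕ, (goodSeqs n (k + 1)).card ≤ n ^ 2 * (2 * (k + 1) * n) ^ k := by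
  intro k
  induction k with
  | zero => simpa using goodSeqs_one_card_le n hn
  | succ k ih =>
    have h1 := goodSeqs_succ_card_le n (k + 1) (Nat.succ_pos k) hn
    calc (goodSeqs n (k + 2)).card
        ≤ (goodSeqs n (k + 1)).card * (2 * (k + 1) * n) := h1
      _ ≤ (n ^ 2 * (2 * (k + 1) * n) ^ k) * (2 * (k + 1) * n) :=
          Nat.mul_le_mul_right _ ih
      _ = n ^ 2 * (2 * (k + 1) * n) ^ (k + 1) := by ring
      _ ≤ n ^ 2 * (2 * (k + 2) * n) ^ (k + 1) := by
          refine Nat.mul_le_mul_left _ ?_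
          refine Nat.pow_le_pow_left ?_ _
          exact Nat.mul_le_mul_right n (by omega)

/-- The enumeration of connected edge-sets used in the proof of Lemma 3.1:
for `m ≥ 1`, the number of sets `E` of `m` edges of `Fin n` such that the
graph whose vertices are the endpoints of edges of `E` and whose edges are
the members of `E` is connected, is at most `n² (2mn)^{m−1}`. -/
theorem count_connected_edge_sets (n m : ℕ) (hm : 1 ≤ m) :
    Set.ncard {E : Finset (Finset (Fin n)) |
        E.card = m ∧ (∀ e ∈ E, e.card = 2) ∧
        ∀ x y : Fin n, (∃ e ∈ E, x ∈ e) → (∃ e ∈ E, y ∈ e) →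
          (edgeGraph E).Reachable x y} ≤
      n ^ 2 * (2 * m * n) ^ (m - 1) := by
  classical
  rcases Nat.eq_zero_or_pos n with hn | hn
  · subst hn
    have hempty : {E : Finset (Finset (Fin 0)) |
        E.card = m ∧ (∀ e ∈ E, e.card = 2) ∧
        ∀ x y : Fin 0, (∃ e ∈ E, x ∈ e) → (∃ e ∈ E, y ∈ e) →
          (edgeGraph E).Reachable x y} = ∅ := by
      ext E
      simp only [Set.mem_setOf_eq, Set.mem_empty_iff_false, iff_false, not_and]
      intro h1 h2
      exfalso
      have hEne : E.Nonempty := Finset.card_pos.mp (by omega)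
      obtain ⟨e, he⟩ := hEne
      have h2e := h2 e he
      have hle : e.card ≤ 0 := by
        simpa using Finset.card_le_univ e
      omega
    rw [hempty]
    simp
  · set S : Set (Finset (Finset (Fin n))) := {E : Finset (Finset (Fin n)) |
        E.card = m ∧ (∀ e ∈ E, e.card = 2) ∧
        ∀ x y : Fin n, (∃ e ∈ E, x ∈ e) → (∃ e ∈ E, y ∈ e) →
          (edgeGraph E).Reachable x y} with hS
    have hinj : S.ncard ≤ (goodSeqs n m).card := by
      rw [← Set.ncard_coe_finset (goodSeqs n m)]
      apply Set.ncard_le_ncard_of_injOn (fun E =>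
        if h : E.card = m ∧ (∀ e ∈ E, e.card = 2) ∧
          (∀ x y : Fin n, (∃ e ∈ E, x ∈ e) → (∃ e ∈ E, y ∈ e) →
            (edgeGraph E).Reachable x y)
        then (exists_goodSeq h.1 hm h.2.1 h.2.2).choose else fun _ => ∅)
      · intro E hE
        have hEc : E.card = m ∧ (∀ e ∈ E, e.card = 2) ∧
            (∀ x y : Fin n, (∃ e ∈ E, x ∈ e) → (∃ e ∈ E, y ∈ e) →
              (edgeGraph E).Reachable x y) := hE
        rw [dif_pos hEc]
        exact (exists_goodSeq hEc.1 hm hEc.2.1 hEc.2.2).choose_spec.1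
      · intro E hE E' hE' heq
        have hEc : E.card = m ∧ (∀ e ∈ E, e.card = 2) ∧
            (∀ x y : Fin n, (∃ e ∈ E, x ∈ e) → (∃ e ∈ E, y ∈ e) →
              (edgeGraph E).Reachable x y) := hE
        have hEc' : E'.card = m ∧ (∀ e ∈ E', e.card = 2) ∧
            (∀ x y : Fin n, (∃ e ∈ E', x ∈ e) → (∃ e ∈ E', y ∈ e) →
              (edgeGraph E').Reachable x y) := hE'
        simp only at heq
        rw [dif_pos hEc, dif_pos hEc'] at heq
        have h1 := (exists_goodSeq hEc.1 hm hEc.2.1 hEc.2.2).choose_spec.2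
        have h2 := (exists_goodSeq hEc'.1 hm hEc'.2.1 hEc'.2.2).choose_spec.2
        rw [← h1, ← h2, heq]
    obtain ⟨k, rfl⟩ : ∃ k, m = k + 1 := ⟨m - 1, by omega⟩
    calc S.ncard ≤ (goodSeqs n (k + 1)).card := hinj
      _ ≤ n ^ 2 * (2 * (k + 1) * n) ^ k := goodSeqs_card_le n hn k
      _ = n ^ 2 * (2 * (↑(k + 1)) * n) ^ (k + 1 - 1) := by norm_num
end
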